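/- For all n ≥ 1 and d ≥ 1, the S_d-derivative in the variable x of the bivariate d-Hoggatt polynomial (x ⊕_d a)^{(n)} := Σ_{k=0}^n ⟨n choose k⟩_d x^{n-k} a^k equals ⟨n⟩_d · (x ⊕_d a)^{(n-1)}. -/

import Mathlib

open Polynomial

/-- The n-th simplicial d-polytopic number ⟨n⟩_d = C(n+d-1, d). -/
def sp (d n : ℕ) : ℕ := Nat.choose (n + d - 1) d

/-- The d-simplitorial ⟨n⟩_d! = ∏_{k=1}^n ⟨k⟩_d, as a rational number. -/
def spFact (d n : ℕ) : ℚ := ∏ k ∈ Finset.Icc 1 n, (sp d k : ℚ)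

/-- The d-Hoggatt binomial coefficient ⟨n choose k⟩_d. -/
def hog (d n k : ℕ) : ℚ := spFact d n / (spFact d k * spFact d (n - k))

/-- The S_d-derivative: the linear-in-coefficients operator on polynomials in x
determined by D_{S_d} x^n = ⟨n⟩_d x^{n-1}. -/
noncomputable def DSd (d : ℕ) (p : ℚ[X]) : ℚ[X] :=
  p.sum fun n a => C (a * (sp d n : ℚ)) * X ^ (n - 1)

/-- The bivariate d-Hoggatt polynomial (x ⊕_d a)^{(n)} = Σ_{k=0}^n ⟨n choose k⟩_d x^{n-k} a^k,
as a polynomial in x with a a constant parameter. -/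
noncomputable def bivarHoggatt (d n : ℕ) (a : ℚ) : ℚ[X] :=
  ∑ k ∈ Finset.range (n + 1), C (hog d n k * a ^ k) * X ^ (n - k)

lemma sp_pos (d k : ℕ) (hk : 1 ≤ k) : 0 < sp d k :=
  Nat.choose_pos (by omega)

lemma spFact_ne_zero (d n : ℕ) : spFact d n ≠ 0 := by
  apply Finset.prod_ne_zero_iff.mpr
  intro k hk
  have := sp_pos d k (Finset.mem_Icc.mp hk).1
  positivity

lemma spFact_succ (d n : ℕ) : spFact d (n + 1) = spFact d n * sp d (n + 1) := by
  unfold spFact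
  rw [Finset.prod_Icc_succ_top (by omega)]

lemma DSd_add (d : ℕ) (p q : ℚ[X]) : DSd d (p + q) = DSd d p + DSd d q := by
  unfold DSd
  rw [Polynomial.sum_add_index] <;> intros <;> simp [add_mul]

lemma DSd_CX (d : ℕ) (c : ℚ) (m : ℕ) :
    DSd d (C c * X ^ m) = C (c * sp d m) * X ^ (m - 1) := by
  unfold DSd
  rw [Polynomial.C_mul_X_pow_eq_monomial, Polynomial.sum_monomial_index]
  simp

lemma hog_key (d n k : ℕ) (hk : k < n) :
    hog d n k * sp d (n - k) = sp d n * hog d (n - 1) k := by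
  unfold hog
  have h1 : spFact d n = spFact d (n - 1) * sp d n := by
    have := spFact_succ d (n - 1)
    rwa [Nat.sub_add_cancel (by omega)] at this
  have h2 : spFact d (n - k) = spFact d (n - 1 - k) * sp d (n - k) := by
    have := spFact_succ d (n - 1 - k)
    rwa [show n - 1 - k + 1 = n - k by omega] at this
  rw [h1, h2]
  have e1 := spFact_ne_zero d k
  have e2 := spFact_ne_zero d (n - 1 - k)
  have e3 := spFact_ne_zero d (n - 1)
  have hs : (sp d (n - k) : ℚ) ≠ 0 := by
    exact_mod_cast (sp_pos d _ (by omega)).ne'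
  field_simp

theorem DSd_bivarHoggatt (d n : ℕ) (hd : 1 ≤ d) (hn : 1 ≤ n) (a : ℚ) :
    DSd d (bivarHoggatt d n a) = C (sp d n : ℚ) * bivarHoggatt d (n - 1) a := by
  have hlin : ∀ (s : Finset ℕ) (f : ℕ → ℚ[X]),
      DSd d (∑ k ∈ s, f k) = ∑ k ∈ s, DSd d (f k) := by
    intro s f
    induction s using Finset.cons_induction with
    | empty => simp [DSd]
    | cons k s hk ih => rw [Finset.sum_cons, DSd_add, ih, Finset.sum_cons]
  unfold bivarHoggatt
  rw [hlin]
  simp only [DSd_CX]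
  rw [Finset.mul_sum, Finset.sum_range_succ]
  have h0 : sp d 0 = 0 := Nat.choose_eq_zero_of_lt (by omega)
  rw [Nat.sub_self, h0]
  simp only [Nat.cast_zero, mul_zero, map_zero, zero_mul, add_zero]
  rw [show n - 1 + 1 = n from Nat.sub_add_cancel hn]
  apply Finset.sum_congr rfl
  intro k hk
  have hkn : k < n := Finset.mem_range.mp hk
  rw [show n - k - 1 = n - 1 - k by omega, ← mul_assoc, ← C_mul]
  have hc : hog d n k * a ^ k * (sp d (n - k) : ℚ)
      = (sp d n : ℚ) * (hog d (n - 1) k * a ^ k) := by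
    linear_combination a ^ k * hog_key d n k hkn
  rw [hc]
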